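/- Let K be a subgroup of X of finite index, let π : X → X̃ := X/K be the quotient map, and assume π is injective on B² = B + B. Let F̃ : (X̃ → A) → (X̃ → A) be the induced cellular automaton, F̃(ã)(x̃) = f(b ↦ ã(x̃ + π(b))). Call a function μ : (X̃ → A) → ℝ shift-invariant if μ(ã ∘ (· + x̃)) = μ(ã) for all ã : X̃ → A and x̃ ∈ X̃. Assume φ⁻¹({0}) ≠ ∅ and that f is vacuum-preserving. Then φ is conserved by F if and only if for every shift-invariant μ : (X̃ → A) → ℝ one has ∑_{ã : X̃ → A} μ(ã) · (φ(F̃(ã)(0̃)) − φ(ã(0̃))) = 0, where 0̃ is the identity of X̃. -/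

import Mathlib

open scoped Pointwise

/-- The cellular automaton induced by a local rule `f` on neighbourhood `B`. -/
def induce {X A : Type*} [AddCommGroup X] (B : Finset X) (f : (B → A) → A)
    (a : X → A) : X → A :=
  fun x => f fun b => a (x + b.1)

/-- `ψ` is conserved by the CA induced by `f` on `B`. -/
def conserved {X A Z : Type*} [AddCommGroup X] [AddCommMonoid Z] (B : Finset X)
    (f : (B → A) → A) (ψ : A → Z) : Prop :=
  (∃ a : A, ψ a = 0) ∧
  (∀ a : X → A, (Function.support fun x => ψ (a x)).Finite →
      (Function.support fun x => ψ (induce B f a x)).Finite) ∧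
  (∀ a : X → A, (Function.support fun x => ψ (a x)).Finite →
      ∑ᶠ x, ψ (induce B f a x) = ∑ᶠ x, ψ (a x))

namespace Stmt10Aux

variable {X A : Type*} [AddCommGroup X]

/-- local divergence of `φ` under the local rule -/
noncomputable def gg (B : Finset X) (f : (B → A) → A) (φ : A → ℝ) (hB0 : (0:X) ∈ B)
    (w : B → A) : ℝ := φ (f w) - φ (w ⟨0, hB0⟩)

/-- window of a configuration on `X` -/
def win (B : Finset X) (a : X → A) (x : X) : B → A := fun b => a (x + b.1)

/-- total divergence on `X` -/
noncomputable def DD (B : Finset X) (f : (B → A) → A) (φ : A → ℝ) (hB0 : (0:X) ∈ B)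
    (a : X → A) : ℝ := ∑ᶠ x, gg B f φ hB0 (win B a x)

/-- window of a configuration on the quotient -/
def twin (B : Finset X) (K : AddSubgroup X) (c : X ⧸ K → A) (y : X ⧸ K) : B → A :=
  fun b => c (y + QuotientAddGroup.mk' K b.1)

/-- total divergence on the quotient -/
noncomputable def TT (B : Finset X) (f : (B → A) → A) (φ : A → ℝ) (hB0 : (0:X) ∈ B)
    (K : AddSubgroup X) (c : X ⧸ K → A) : ℝ :=
  ∑ᶠ y, gg B f φ hB0 (twin B K c y)

variable {B : Finset X} {f : (B → A) → A} {φ : A → ℝ} {K : AddSubgroup X}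

lemma gg_vanish (hB0 : (0:X) ∈ B)
    (hfvac : ∀ w : B → A, (∀ b, φ (w b) = 0) → φ (f w) = 0)
    {w : B → A} (hw : ∀ b, φ (w b) = 0) : gg B f φ hB0 w = 0 := by
  simp [gg, hfvac w hw, hw]

lemma exists_b_of_gg_ne (hB0 : (0:X) ∈ B)
    (hfvac : ∀ w : B → A, (∀ b, φ (w b) = 0) → φ (f w) = 0)
    {a : X → A} {x : X} (h : gg B f φ hB0 (win B a x) ≠ 0) :
    ∃ b ∈ B, φ (a (x + b)) ≠ 0 := by
  by_contra hc
  push_neg at hc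
  exact h (gg_vanish hB0 hfvac fun b => hc b.1 b.2)

lemma supp_win_finite (hB0 : (0:X) ∈ B)
    (hfvac : ∀ w : B → A, (∀ b, φ (w b) = 0) → φ (f w) = 0)
    {a : X → A} (ha : (Function.support fun x => φ (a x)).Finite) :
    (Function.support fun x => gg B f φ hB0 (win B a x)).Finite := by
  have hsub : (Function.support fun x => gg B f φ hB0 (win B a x)) ⊆
      ⋃ b ∈ (B : Set X), (· + b) ⁻¹' (Function.support fun y => φ (a y)) := by
    intro x hx
    obtain ⟨b, hb, hb'⟩ := exists_b_of_gg_ne hB0 hfvac hx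
    exact Set.mem_biUnion hb hb'
  exact (Set.Finite.biUnion B.finite_toSet (fun b _ =>
    ha.preimage (fun x _ y _ h => by simpa using h))).subset hsub

lemma supp_induce_finite (hB0 : (0:X) ∈ B)
    (hfvac : ∀ w : B → A, (∀ b, φ (w b) = 0) → φ (f w) = 0)
    {a : X → A} (ha : (Function.support fun x => φ (a x)).Finite) :
    (Function.support fun x => φ (induce B f a x)).Finite := by
  have hsub : (Function.support fun x => φ (induce B f a x)) ⊆
      ⋃ b ∈ (B : Set X), (· + b) ⁻¹' (Function.support fun y => φ (a y)) := by
    intro x hx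
    have : ∃ b ∈ B, φ (a (x + b)) ≠ 0 := by
      by_contra hc
      push_neg at hc
      exact hx (hfvac _ fun b => hc b.1 b.2)
    obtain ⟨b, hb, hb'⟩ := this
    exact Set.mem_biUnion hb hb'
  exact (Set.Finite.biUnion B.finite_toSet (fun b _ =>
    ha.preimage (fun x _ y _ h => by simpa using h))).subset hsub

lemma DD_eq (hB0 : (0:X) ∈ B)
    (hfvac : ∀ w : B → A, (∀ b, φ (w b) = 0) → φ (f w) = 0)
    {a : X → A} (ha : (Function.support fun x => φ (a x)).Finite) :
    DD B f φ hB0 a = (∑ᶠ x, φ (induce B f a x)) - ∑ᶠ x, φ (a x) := by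
  have h1 : DD B f φ hB0 a = ∑ᶠ x, (φ (induce B f a x) - φ (a x)) := by
    refine finsum_congr fun x => ?_
    have h2 : win B a x ⟨0, hB0⟩ = a x := by simp [win]
    simp only [gg, h2]
    rfl
  rw [h1, finsum_sub_distrib (supp_induce_finite hB0 hfvac ha) ha]

/-- The key exchange lemma: flipping one cell changes the total divergence on `X`
by the same amount as the corresponding flip on the quotient. -/
lemma core [Finite (X ⧸ K)] (hB0 : (0:X) ∈ B) (hBsym : ∀ b : X, b ∈ B ↔ -b ∈ B)
    (hinj : Set.InjOn (QuotientAddGroup.mk' K) ((B : Set X) + (B : Set X)))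
    (p : X) (u₁ u₂ : X → A) (c₁ c₂ : X ⧸ K → A)
    (hu : ∀ x, x ≠ p → u₁ x = u₂ x)
    (hc : ∀ y, y ≠ QuotientAddGroup.mk' K p → c₁ y = c₂ y)
    (hm₁ : ∀ z ∈ (B : Set X) + (B : Set X),
      c₁ (QuotientAddGroup.mk' K (p + z)) = u₁ (p + z))
    (hm₂ : ∀ z ∈ (B : Set X) + (B : Set X),
      c₂ (QuotientAddGroup.mk' K (p + z)) = u₂ (p + z)) :
    ∑ᶠ x, (gg B f φ hB0 (win B u₁ x) - gg B f φ hB0 (win B u₂ x)) =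
    ∑ᶠ y, (gg B f φ hB0 (twin B K c₁ y) - gg B f φ hB0 (twin B K c₂ y)) := by
  classical
  letI : Fintype (X ⧸ K) := Fintype.ofFinite _
  set π : X →+ X ⧸ K := QuotientAddGroup.mk' K with hπ
  have hmemBB : ∀ b ∈ B, (b : X) ∈ (B : Set X) + (B : Set X) := fun b hb =>
    ⟨b, hb, 0, hB0, add_zero b⟩
  have hmem2 : ∀ b ∈ B, ∀ b' ∈ B, -b + b' ∈ (B : Set X) + (B : Set X) := fun b hb b' hb' =>
    ⟨-b, (hBsym b).1 hb, b', hb', rfl⟩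
  -- LHS as a sum over B
  have hL : (Function.support fun x =>
      gg B f φ hB0 (win B u₁ x) - gg B f φ hB0 (win B u₂ x)) ⊆
      ↑(B.image fun b => p - b) := by
    intro x hx
    by_contra hni
    have hxb : ∀ b : B, x + b.1 ≠ p := by
      intro b hb
      apply hni
      refine Finset.mem_coe.2 (Finset.mem_image.2 ⟨b.1, b.2, ?_⟩)
      rw [← hb]; abel
    have heq : win B u₁ x = win B u₂ x := funext fun b => hu _ (hxb b)
    simp only [Function.mem_support] at hx
    exact hx (by rw [heq, sub_self])
  rw [finsum_eq_finset_sum_of_support_subset _ hL]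
  have hinj1 : ∀ b ∈ B, ∀ b' ∈ B, p - b = p - b' → b = b' := by
    intro b _ b' _ h
    have := sub_right_injective h
    simpa using this
  rw [Finset.sum_image hinj1]
  -- RHS as a sum over B
  rw [finsum_eq_sum_of_fintype]
  have hvanish : ∀ y ∈ Finset.univ, y ∉ (B.image fun b => π p - π b) →
      gg B f φ hB0 (twin B K c₁ y) - gg B f φ hB0 (twin B K c₂ y) = 0 := by
    intro y _ hy
    have : twin B K c₁ y = twin B K c₂ y := by
      funext b
      refine hc _ fun hyp => ?_
      exact hy (by
        refine Finset.mem_image.2 ⟨b.1, b.2, ?_⟩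
        rw [← hyp]; abel)
    rw [this, sub_self]
  rw [← Finset.sum_subset (Finset.subset_univ (B.image fun b => π p - π b)) hvanish]
  have hinj2 : ∀ b ∈ B, ∀ b' ∈ B, π p - π b = π p - π b' → b = b' := by
    intro b hb b' hb' h
    have h2 : π b = π b' := by
      have := sub_right_injective h; simpa using this
    exact hinj (hmemBB b hb) (hmemBB b' hb') h2
  rw [Finset.sum_image hinj2]
  -- termwise
  refine Finset.sum_congr rfl fun b hb => ?_
  have key : ∀ (u : X → A) (c : X ⧸ K → A),
      (∀ z ∈ (B : Set X) + (B : Set X), c (π (p + z)) = u (p + z)) →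
      win B u (p - b) = twin B K c (π p - π b) := by
    intro u c hm
    funext b'
    have hz : -b + b'.1 ∈ (B : Set X) + (B : Set X) := hmem2 b hb b'.1 b'.2
    have e1 : p - b + b'.1 = p + (-b + b'.1) := by abel
    have e2 : π p - π b + π b'.1 = π (p + (-b + b'.1)) := by
      rw [map_add, map_add, map_neg]; abel
    show u (p - b + b'.1) = c (π p - π b + π b'.1)
    rw [e1, e2, hm _ hz]
  rw [key u₁ c₁ hm₁, key u₂ c₂ hm₂]

open Classical in
/-- wrap the `B+B`-neighbourhood of `p` in `u` onto the quotient, vacuum elsewhere -/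
noncomputable def wrap (B : Finset X) (K : AddSubgroup X) (v : A) (p : X) (u : X → A) :
    X ⧸ K → A := fun y =>
  if h : ∃ z, z ∈ (B : Set X) + (B : Set X) ∧ QuotientAddGroup.mk' K (p + z) = y
  then u (p + h.choose) else v

lemma wrap_spec (hinj : Set.InjOn (QuotientAddGroup.mk' K) ((B : Set X) + (B : Set X)))
    (v : A) (p : X) (u : X → A) :
    ∀ z ∈ (B : Set X) + (B : Set X),
      wrap B K v p u (QuotientAddGroup.mk' K (p + z)) = u (p + z) := by
  intro z hz
  have h : ∃ z', z' ∈ (B : Set X) + (B : Set X) ∧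
      QuotientAddGroup.mk' K (p + z') = QuotientAddGroup.mk' K (p + z) := ⟨z, hz, rfl⟩
  simp only [wrap]
  rw [dif_pos h]
  obtain ⟨h1, h2⟩ := h.choose_spec
  have h4 : QuotientAddGroup.mk' K p + QuotientAddGroup.mk' K h.choose
      = QuotientAddGroup.mk' K p + QuotientAddGroup.mk' K z := by
    rw [← map_add, ← map_add]; exact h2
  rw [hinj h1 hz (add_left_cancel h4)]

lemma wrap_agree (v : A) (p : X) (u₁ u₂ : X → A) (hu : ∀ x, x ≠ p → u₁ x = u₂ x) :
    ∀ y, y ≠ QuotientAddGroup.mk' K p → wrap B K v p u₁ y = wrap B K v p u₂ y := by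
  intro y hy
  simp only [wrap]
  split_ifs with h
  · refine hu _ fun he => hy ?_
    rw [← h.choose_spec.2, he]
  · rfl

open Classical in
/-- lift the `B+B`-neighbourhood of `p` in `c` from the quotient to `X`, vacuum elsewhere -/
noncomputable def liftc (B : Finset X) (K : AddSubgroup X) (v : A) (p : X)
    (c : X ⧸ K → A) : X → A := fun x =>
  if ∃ z ∈ (B : Set X) + (B : Set X), x = p + z then c (QuotientAddGroup.mk' K x) else v

lemma liftc_spec (v : A) (p : X) (c : X ⧸ K → A) :
    ∀ z ∈ (B : Set X) + (B : Set X),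
      liftc B K v p c (p + z) = c (QuotientAddGroup.mk' K (p + z)) := by
  intro z hz
  simp only [liftc]
  rw [if_pos ⟨z, hz, rfl⟩]

lemma liftc_agree (hB0 : (0:X) ∈ B)
    (hinj : Set.InjOn (QuotientAddGroup.mk' K) ((B : Set X) + (B : Set X)))
    (v : A) (p : X) (c₁ c₂ : X ⧸ K → A)
    (hc : ∀ y, y ≠ QuotientAddGroup.mk' K p → c₁ y = c₂ y) :
    ∀ x, x ≠ p → liftc B K v p c₁ x = liftc B K v p c₂ x := by
  intro x hx
  simp only [liftc]
  split_ifs with h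
  · obtain ⟨z, hz, rfl⟩ := h
    refine hc _ fun he => hx ?_
    have h0 : (0:X) ∈ (B : Set X) + (B : Set X) := ⟨0, hB0, 0, hB0, add_zero 0⟩
    have hz0 : QuotientAddGroup.mk' K z = QuotientAddGroup.mk' K 0 := by
      rw [map_zero]
      rw [map_add] at he
      have : QuotientAddGroup.mk' K p + QuotientAddGroup.mk' K z
          = QuotientAddGroup.mk' K p + 0 := by rw [add_zero]; exact he
      exact add_left_cancel this
    rw [hinj hz h0 hz0, add_zero]
  · rfl

lemma liftc_supp (v : A) (hv : φ v = 0) (p : X) (c : X ⧸ K → A) :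
    (Function.support fun x => φ (liftc B K v p c x)).Finite := by
  have hsub : (Function.support fun x => φ (liftc B K v p c x)) ⊆
      (fun z => p + z) '' ((B : Set X) + (B : Set X)) := by
    intro x hx
    by_contra hni
    have : ¬ ∃ z ∈ (B : Set X) + (B : Set X), x = p + z := by
      rintro ⟨z, hz, rfl⟩
      exact hni ⟨z, hz, rfl⟩
    simp only [Function.mem_support, liftc, if_neg this] at hx
    exact hx hv
  exact (((B.finite_toSet.add B.finite_toSet).image _)).subset hsub

variable [Finite (X ⧸ K)]

lemma DD_flip (hB0 : (0:X) ∈ B) (hBsym : ∀ b : X, b ∈ B ↔ -b ∈ B)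
    (hinj : Set.InjOn (QuotientAddGroup.mk' K) ((B : Set X) + (B : Set X)))
    (hfvac : ∀ w : B → A, (∀ b, φ (w b) = 0) → φ (f w) = 0)
    (v : A) (hv : φ v = 0)
    (hTT : ∀ c, TT B f φ hB0 K c = 0)
    (p : X) (u₁ u₂ : X → A)
    (h1 : (Function.support fun x => φ (u₁ x)).Finite)
    (h2 : (Function.support fun x => φ (u₂ x)).Finite)
    (hu : ∀ x, x ≠ p → u₁ x = u₂ x) :
    DD B f φ hB0 u₁ = DD B f φ hB0 u₂ := by
  have hcore := core (f := f) (φ := φ) hB0 hBsym hinj p u₁ u₂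
    (wrap B K v p u₁) (wrap B K v p u₂) hu
    (wrap_agree v p u₁ u₂ hu)
    (wrap_spec hinj v p u₁) (wrap_spec hinj v p u₂)
  rw [finsum_sub_distrib (supp_win_finite hB0 hfvac h1) (supp_win_finite hB0 hfvac h2),
    finsum_sub_distrib (Set.toFinite _) (Set.toFinite _)] at hcore
  have e1 : ∑ᶠ y, gg B f φ hB0 (twin B K (wrap B K v p u₁) y) = 0 := hTT _
  have e2 : ∑ᶠ y, gg B f φ hB0 (twin B K (wrap B K v p u₂) y) = 0 := hTT _
  rw [e1, e2] at hcore
  have h5 : DD B f φ hB0 u₁ - DD B f φ hB0 u₂ = 0 - 0 := hcore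
  linarith

lemma TT_flip (hB0 : (0:X) ∈ B) (hBsym : ∀ b : X, b ∈ B ↔ -b ∈ B)
    (hinj : Set.InjOn (QuotientAddGroup.mk' K) ((B : Set X) + (B : Set X)))
    (hfvac : ∀ w : B → A, (∀ b, φ (w b) = 0) → φ (f w) = 0)
    (v : A) (hv : φ v = 0)
    (hDD : ∀ u : X → A, (Function.support fun x => φ (u x)).Finite → DD B f φ hB0 u = 0)
    (q : X ⧸ K) (c₁ c₂ : X ⧸ K → A)
    (hc : ∀ y, y ≠ q → c₁ y = c₂ y) :
    TT B f φ hB0 K c₁ = TT B f φ hB0 K c₂ := by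
  obtain ⟨p, rfl⟩ := QuotientAddGroup.mk'_surjective K q
  have hcore := core (f := f) (φ := φ) hB0 hBsym hinj p
    (liftc B K v p c₁) (liftc B K v p c₂) c₁ c₂
    (liftc_agree hB0 hinj v p c₁ c₂ hc) hc
    (fun z hz => (liftc_spec v p c₁ z hz).symm)
    (fun z hz => (liftc_spec v p c₂ z hz).symm)
  rw [finsum_sub_distrib (supp_win_finite hB0 hfvac (liftc_supp v hv p c₁))
      (supp_win_finite hB0 hfvac (liftc_supp v hv p c₂)),
    finsum_sub_distrib (Set.toFinite _) (Set.toFinite _)] at hcore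
  have e1 : DD B f φ hB0 (liftc B K v p c₁) = 0 := hDD _ (liftc_supp v hv p c₁)
  have e2 : DD B f φ hB0 (liftc B K v p c₂) = 0 := hDD _ (liftc_supp v hv p c₂)
  have h5 : DD B f φ hB0 (liftc B K v p c₁) - DD B f φ hB0 (liftc B K v p c₂)
      = TT B f φ hB0 K c₁ - TT B f φ hB0 K c₂ := hcore
  rw [e1, e2] at h5
  linarith

lemma DD_eq_of_agree (hB0 : (0:X) ∈ B) (hBsym : ∀ b : X, b ∈ B ↔ -b ∈ B)
    (hinj : Set.InjOn (QuotientAddGroup.mk' K) ((B : Set X) + (B : Set X)))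
    (hfvac : ∀ w : B → A, (∀ b, φ (w b) = 0) → φ (f w) = 0)
    (v : A) (hv : φ v = 0)
    (hTT : ∀ c, TT B f φ hB0 K c = 0) :
    ∀ (s : Finset X) (u₁ u₂ : X → A),
      (Function.support fun x => φ (u₁ x)).Finite →
      (Function.support fun x => φ (u₂ x)).Finite →
      (∀ x ∉ s, u₁ x = u₂ x) → DD B f φ hB0 u₁ = DD B f φ hB0 u₂ := by
  classical
  intro s
  induction s using Finset.induction_on with
  | empty =>
    intro u₁ u₂ _ _ h
    have : u₁ = u₂ := funext fun x => h x (Finset.notMem_empty x)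
    rw [this]
  | @insert a s ha ih =>
    intro u₁ u₂ h1 h2 h
    set u₃ := Function.update u₁ a (u₂ a) with hu₃
    have h3 : (Function.support fun x => φ (u₃ x)).Finite := by
      refine (h1.union (Set.finite_singleton a)).subset ?_
      intro x hx
      by_cases hxa : x = a
      · exact Or.inr (by simp [hxa])
      · exact Or.inl (by simpa [hu₃, Function.update_of_ne hxa] using hx)
    have step1 : DD B f φ hB0 u₁ = DD B f φ hB0 u₃ :=
      DD_flip hB0 hBsym hinj hfvac v hv hTT a u₁ u₃ h1 h3
        (fun x hx => (Function.update_of_ne hx _ _).symm)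
    have step2 : DD B f φ hB0 u₃ = DD B f φ hB0 u₂ := by
      refine ih u₃ u₂ h3 h2 fun x hx => ?_
      by_cases hxa : x = a
      · subst hxa; simp [hu₃]
      · rw [hu₃, Function.update_of_ne hxa]
        exact h x (by simp [hxa, hx])
    rw [step1, step2]

lemma DD_zero_of_TT (hB0 : (0:X) ∈ B) (hBsym : ∀ b : X, b ∈ B ↔ -b ∈ B)
    (hinj : Set.InjOn (QuotientAddGroup.mk' K) ((B : Set X) + (B : Set X)))
    (hfvac : ∀ w : B → A, (∀ b, φ (w b) = 0) → φ (f w) = 0)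
    (v : A) (hv : φ v = 0)
    (hTT : ∀ c, TT B f φ hB0 K c = 0) :
    ∀ u : X → A, (Function.support fun x => φ (u x)).Finite → DD B f φ hB0 u = 0 := by
  classical
  intro u hu
  set u' := fun x => if φ (u x) = 0 then u x else v with hu'
  have hu'supp : ∀ x, φ (u' x) = 0 := by
    intro x
    by_cases h : φ (u x) = 0 <;> simp [hu', h, hv]
  have h2 : (Function.support fun x => φ (u' x)).Finite :=
    Set.finite_empty.subset fun x hx => (hx (hu'supp x)).elim
  have hDD' : DD B f φ hB0 u' = 0 := by
    have hz : ∀ x, gg B f φ hB0 (win B u' x) = 0 := fun x =>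
      gg_vanish hB0 hfvac fun b => hu'supp _
    calc DD B f φ hB0 u' = ∑ᶠ x : X, (0:ℝ) := finsum_congr hz
    _ = 0 := finsum_zero
  have := DD_eq_of_agree hB0 hBsym hinj hfvac v hv hTT hu.toFinset u u' hu h2
    (fun x hx => by
      have hx0 : φ (u x) = 0 := by
        by_contra hne
        exact hx (hu.mem_toFinset.2 hne)
      simp [hu', hx0])
  rw [this, hDD']

lemma TT_eq_of_agree (hB0 : (0:X) ∈ B) (hBsym : ∀ b : X, b ∈ B ↔ -b ∈ B)
    (hinj : Set.InjOn (QuotientAddGroup.mk' K) ((B : Set X) + (B : Set X)))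
    (hfvac : ∀ w : B → A, (∀ b, φ (w b) = 0) → φ (f w) = 0)
    (v : A) (hv : φ v = 0)
    (hDD : ∀ u : X → A, (Function.support fun x => φ (u x)).Finite → DD B f φ hB0 u = 0) :
    ∀ (s : Finset (X ⧸ K)) (c₁ c₂ : X ⧸ K → A),
      (∀ y ∉ s, c₁ y = c₂ y) → TT B f φ hB0 K c₁ = TT B f φ hB0 K c₂ := by
  classical
  intro s
  induction s using Finset.induction_on with
  | empty =>
    intro c₁ c₂ h
    have : c₁ = c₂ := funext fun y => h y (Finset.notMem_empty y)
    rw [this]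
  | @insert a s ha ih =>
    intro c₁ c₂ h
    set c₃ := Function.update c₁ a (c₂ a) with hc₃
    have step1 : TT B f φ hB0 K c₁ = TT B f φ hB0 K c₃ :=
      TT_flip hB0 hBsym hinj hfvac v hv hDD a c₁ c₃
        (fun y hy => (Function.update_of_ne hy _ _).symm)
    have step2 : TT B f φ hB0 K c₃ = TT B f φ hB0 K c₂ := by
      refine ih c₃ c₂ fun y hy => ?_
      by_cases hya : y = a
      · subst hya; simp [hc₃]
      · rw [hc₃, Function.update_of_ne hya]
        exact h y (by simp [hya, hy])
    rw [step1, step2]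

lemma TT_zero_of_DD (hB0 : (0:X) ∈ B) (hBsym : ∀ b : X, b ∈ B ↔ -b ∈ B)
    (hinj : Set.InjOn (QuotientAddGroup.mk' K) ((B : Set X) + (B : Set X)))
    (hfvac : ∀ w : B → A, (∀ b, φ (w b) = 0) → φ (f w) = 0)
    (v : A) (hv : φ v = 0)
    (hDD : ∀ u : X → A, (Function.support fun x => φ (u x)).Finite → DD B f φ hB0 u = 0) :
    ∀ c : X ⧸ K → A, TT B f φ hB0 K c = 0 := by
  classical
  letI : Fintype (X ⧸ K) := Fintype.ofFinite _
  intro c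
  have h1 : TT B f φ hB0 K c = TT B f φ hB0 K (fun _ => v) :=
    TT_eq_of_agree hB0 hBsym hinj hfvac v hv hDD Finset.univ c (fun _ => v)
      (fun y hy => absurd (Finset.mem_univ y) hy)
  have h2 : TT B f φ hB0 K (fun _ => v) = 0 := by
    have hz : ∀ y : X ⧸ K, gg B f φ hB0 (twin B K (fun _ => v) y) = 0 := fun y =>
      gg_vanish hB0 hfvac fun b => hv
    calc TT B f φ hB0 K (fun _ => v) = ∑ᶠ y : X ⧸ K, (0:ℝ) := finsum_congr hz
    _ = 0 := finsum_zero
  rw [h1, h2]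

lemma gg_twin_eq (hB0 : (0:X) ∈ B) (c : X ⧸ K → A) (xt : X ⧸ K) :
    gg B f φ hB0 (twin B K c xt)
      = φ (f fun b => c ((0 : X ⧸ K) + QuotientAddGroup.mk' K b.1 + xt))
        - φ (c ((0 : X ⧸ K) + xt)) := by
  have e1 : twin B K c xt = fun b : B => c ((0 : X ⧸ K) + QuotientAddGroup.mk' K b.1 + xt) := by
    funext b
    show c (xt + QuotientAddGroup.mk' K b.1) = _
    congr 1
    abel
  have e2 : twin B K c xt ⟨0, hB0⟩ = c ((0 : X ⧸ K) + xt) := by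
    show c (xt + QuotientAddGroup.mk' K (0:X)) = _
    congr 1
    rw [map_zero, add_zero, zero_add]
  rw [gg, e2, ← e1]

lemma mu_cond_of_TT [Fintype A] (hB0 : (0:X) ∈ B)
    (hTT : ∀ c : X ⧸ K → A, TT B f φ hB0 K c = 0) :
    ∀ μ : ((X ⧸ K) → A) → ℝ,
      (∀ (c : (X ⧸ K) → A) (x : X ⧸ K), μ (fun y => c (y + x)) = μ c) →
      (∑ᶠ c : (X ⧸ K) → A,
        μ c * (φ (f fun b => c ((0 : X ⧸ K) + QuotientAddGroup.mk' K b.1)) -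
                φ (c (0 : X ⧸ K)))) = 0 := by
  classical
  letI : Fintype (X ⧸ K) := Fintype.ofFinite _
  intro μ hμ
  set Δ : ((X ⧸ K) → A) → ℝ := fun c =>
    φ (f fun b => c ((0 : X ⧸ K) + QuotientAddGroup.mk' K b.1)) - φ (c (0 : X ⧸ K)) with hΔ
  rw [finsum_eq_sum_of_fintype]
  have key : ∀ xt : X ⧸ K, ∑ c : (X ⧸ K) → A, μ c * Δ c
      = ∑ c : (X ⧸ K) → A, μ c * gg B f φ hB0 (twin B K c xt) := by
    intro xt
    have hbij : Function.Bijective (fun (c : (X ⧸ K) → A) => fun y => c (y + xt)) := by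
      constructor
      · intro c₁ c₂ h
        funext y
        have := congrFun h (y - xt)
        simpa using this
      · intro c
        exact ⟨fun y => c (y - xt), funext fun y => by simp⟩
    calc ∑ c : (X ⧸ K) → A, μ c * Δ c
        = ∑ c : (X ⧸ K) → A, μ (fun y => c (y + xt)) * Δ (fun y => c (y + xt)) :=
          (Fintype.sum_bijective _ hbij _ _ (fun c => rfl)).symm
      _ = ∑ c : (X ⧸ K) → A, μ c * gg B f φ hB0 (twin B K c xt) := by
          refine Finset.sum_congr rfl fun c _ => ?_
          rw [hμ c xt]
          congr 1
          exact (gg_twin_eq hB0 c xt).symm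
  have h2 : (Fintype.card (X ⧸ K) : ℝ) * (∑ c : (X ⧸ K) → A, μ c * Δ c)
      = ∑ c : (X ⧸ K) → A, μ c * TT B f φ hB0 K c := by
    calc (Fintype.card (X ⧸ K) : ℝ) * (∑ c : (X ⧸ K) → A, μ c * Δ c)
        = ∑ _xt : X ⧸ K, (∑ c : (X ⧸ K) → A, μ c * Δ c) := by
          rw [Finset.sum_const, Finset.card_univ, nsmul_eq_mul]
      _ = ∑ xt : X ⧸ K, ∑ c : (X ⧸ K) → A, μ c * gg B f φ hB0 (twin B K c xt) :=
          Finset.sum_congr rfl (fun xt _ => key xt)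
      _ = ∑ c : (X ⧸ K) → A, ∑ xt : X ⧸ K, μ c * gg B f φ hB0 (twin B K c xt) :=
          Finset.sum_comm
      _ = ∑ c : (X ⧸ K) → A, μ c * TT B f φ hB0 K c := by
          refine Finset.sum_congr rfl fun c _ => ?_
          rw [TT, finsum_eq_sum_of_fintype, Finset.mul_sum]
  have h3 : ∑ c : (X ⧸ K) → A, μ c * TT B f φ hB0 K c = 0 := by
    simp [hTT]
  rw [h3] at h2
  rcases mul_eq_zero.1 h2 with h | h
  · exact absurd h (by
      have : (Fintype.card (X ⧸ K) : ℝ) ≠ 0 := by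
        exact_mod_cast Fintype.card_ne_zero
      exact this)
  · exact h

lemma TT_of_mu_cond [Fintype A] (hB0 : (0:X) ∈ B)
    (hmu : ∀ μ : ((X ⧸ K) → A) → ℝ,
      (∀ (c : (X ⧸ K) → A) (x : X ⧸ K), μ (fun y => c (y + x)) = μ c) →
      (∑ᶠ c : (X ⧸ K) → A,
        μ c * (φ (f fun b => c ((0 : X ⧸ K) + QuotientAddGroup.mk' K b.1)) -
                φ (c (0 : X ⧸ K)))) = 0) :
    ∀ c : X ⧸ K → A, TT B f φ hB0 K c = 0 := by
  classical
  letI : Fintype (X ⧸ K) := Fintype.ofFinite _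
  intro c₀
  set Δ : ((X ⧸ K) → A) → ℝ := fun c =>
    φ (f fun b => c ((0 : X ⧸ K) + QuotientAddGroup.mk' K b.1)) - φ (c (0 : X ⧸ K)) with hΔ
  set S : (X ⧸ K) → ((X ⧸ K) → A) := fun xt => fun y => c₀ (y + xt) with hS
  set μ : ((X ⧸ K) → A) → ℝ := fun c =>
    ((Finset.univ.filter fun xt => c = S xt).card : ℝ) with hμdef
  have hinv : ∀ (c : (X ⧸ K) → A) (z : X ⧸ K), μ (fun y => c (y + z)) = μ c := by
    intro c z
    have hcard : (Finset.univ.filter fun xt => c = S xt).card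
        = (Finset.univ.filter fun xt => (fun y => c (y + z)) = S xt).card := by
      refine Finset.card_nbij' (fun xt => xt + z) (fun xt => xt - z) ?_ ?_ ?_ ?_
      · intro xt hxt
        rw [Finset.mem_coe, Finset.mem_filter] at hxt ⊢
        refine ⟨Finset.mem_univ _, ?_⟩
        funext y
        rw [hxt.2]
        show c₀ (y + z + xt) = c₀ (y + (xt + z))
        congr 1
        abel
      · intro xt hxt
        rw [Finset.mem_coe, Finset.mem_filter] at hxt ⊢
        refine ⟨Finset.mem_univ _, ?_⟩
        funext y
        have h6 : c (y - z + z) = S xt (y - z) := congrFun hxt.2 (y - z)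
        have e1 : y - z + z = y := by abel
        rw [e1] at h6
        show c y = c₀ (y + (xt - z))
        rw [h6]
        show c₀ (y - z + xt) = c₀ (y + (xt - z))
        congr 1
        abel
      · intro xt _
        show xt + z - z = xt
        abel
      · intro xt _
        show xt - z + z = xt
        abel
    rw [hμdef]
    simp only
    rw [← hcard]
  have hsum := hmu μ hinv
  rw [finsum_eq_sum_of_fintype] at hsum
  have h1 : ∑ c : (X ⧸ K) → A, μ c * Δ c = ∑ xt : X ⧸ K, Δ (S xt) := by
    calc ∑ c : (X ⧸ K) → A, μ c * Δ c
        = ∑ c : (X ⧸ K) → A, ∑ xt ∈ Finset.univ.filter (fun xt => c = S xt), Δ c := by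
          refine Finset.sum_congr rfl fun c _ => ?_
          rw [Finset.sum_const, nsmul_eq_mul]
      _ = ∑ c : (X ⧸ K) → A, ∑ xt : X ⧸ K, if c = S xt then Δ c else 0 := by
          refine Finset.sum_congr rfl fun c _ => ?_
          rw [Finset.sum_filter]
      _ = ∑ xt : X ⧸ K, ∑ c : (X ⧸ K) → A, if c = S xt then Δ c else 0 := Finset.sum_comm
      _ = ∑ xt : X ⧸ K, Δ (S xt) := by
          refine Finset.sum_congr rfl fun xt _ => ?_
          rw [Finset.sum_ite_eq' Finset.univ (S xt) Δ, if_pos (Finset.mem_univ _)]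
  have h2 : ∑ xt : X ⧸ K, Δ (S xt) = TT B f φ hB0 K c₀ := by
    rw [TT, finsum_eq_sum_of_fintype]
    refine Finset.sum_congr rfl fun xt _ => ?_
    exact (gg_twin_eq hB0 c₀ xt).symm
  rw [h1, h2] at hsum
  exact hsum

end Stmt10Aux

theorem stmt10 {X A : Type*} [AddCommGroup X] [Fintype A] [Nonempty A]
    (B : Finset X) (hB0 : (0 : X) ∈ B) (hBsym : ∀ b : X, b ∈ B ↔ -b ∈ B)
    (f : (B → A) → A) (φ : A → ℝ)
    (K : AddSubgroup X) [Finite (X ⧸ K)]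
    (hinj : Set.InjOn (QuotientAddGroup.mk' K) ((B : Set X) + (B : Set X)))
    (hvac : ∃ a : A, φ a = 0)
    (hfvac : ∀ w : B → A, (∀ b, φ (w b) = 0) → φ (f w) = 0) :
    conserved B f φ ↔
      ∀ μ : ((X ⧸ K) → A) → ℝ,
        (∀ (c : (X ⧸ K) → A) (x : X ⧸ K), μ (fun y => c (y + x)) = μ c) →
        (∑ᶠ c : (X ⧸ K) → A,
          μ c * (φ (f fun b => c ((0 : X ⧸ K) + QuotientAddGroup.mk' K b.1)) -
                  φ (c (0 : X ⧸ K)))) = 0 := by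
  classical
  obtain ⟨v, hv⟩ := hvac
  constructor
  · rintro ⟨h1, h2, h3⟩
    have hDD : ∀ u : X → A, (Function.support fun x => φ (u x)).Finite →
        Stmt10Aux.DD B f φ hB0 u = 0 := by
      intro u hu
      rw [Stmt10Aux.DD_eq hB0 hfvac hu, h3 u hu, sub_self]
    have hTT := Stmt10Aux.TT_zero_of_DD hB0 hBsym hinj hfvac v hv hDD
    exact Stmt10Aux.mu_cond_of_TT hB0 hTT
  · intro hmu
    have hTT := Stmt10Aux.TT_of_mu_cond hB0 hmu
    have hDD := Stmt10Aux.DD_zero_of_TT hB0 hBsym hinj hfvac v hv hTT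
    refine ⟨⟨v, hv⟩, fun a ha => Stmt10Aux.supp_induce_finite hB0 hfvac ha, fun a ha => ?_⟩
    have h4 := hDD a ha
    rw [Stmt10Aux.DD_eq hB0 hfvac ha] at h4
    linarith
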